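/- arXiv:1605.08632 — 6 statements merged into one kernel-verified Lean document; each statement's English description precedes it below -/
import Mathlib

section
/- Let x : ℝ → ℝ satisfy x(t) decaying as x'(t) = -0.2·x(t) on intervals between positive integers, with jumps x(k) = 2·x(k⁻) at odd positive integers k and x(k) = 0.6·x(k⁻) at even positive integers k, and x(0) = x₀ ≥ 0. Then x(t) → 0 as t → ∞. -/
open Filter Set

/-- Example 1: impulsive decay with jump factor 2 at odd positive integers and 0.6 at
even positive integers; the solution tends to 0. -/
theorem stmt0 (x : ℝ → ℝ) (x₀ : ℝ)
    (hx0 : x 0 = x₀) (hx0nn : 0 ≤ x₀)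
    (hcont : ∀ k : ℕ, ContinuousOn x (Set.Ico (k : ℝ) (k + 1)))
    (hode : ∀ t : ℝ, 0 < t → (∀ k : ℕ, t ≠ (k : ℝ)) →
      HasDerivAt x (-(0.2) * x t) t)
    (hjump : ∀ k : ℕ, 0 < k → ∃ L : ℝ,
      Tendsto x (nhdsWithin (k : ℝ) (Set.Iio (k : ℝ))) (nhds L) ∧
      x (k : ℝ) = (if Odd k then (2 : ℝ) else 0.6) * L) :
    Tendsto x atTop (nhds 0) := by
  set r : ℝ := 1.2 * Real.exp (-(0.4)) with hrdef
  have hr0 : 0 ≤ r := by positivity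
  have hr1 : r < 1 := by
    have h1 : (1.4 : ℝ) ≤ Real.exp 0.4 := by
      have := Real.add_one_le_exp (0.4 : ℝ); linarith
    have h2 : Real.exp (-(0.4)) * Real.exp (0.4) = 1 := by
      rw [← Real.exp_add]; norm_num
    have h3 : 0 < Real.exp (-(0.4)) := Real.exp_pos _
    nlinarith
  -- the explicit formula on each interval [k, k+1)
  have key : ∀ k : ℕ, ∀ t : ℝ, (k : ℝ) ≤ t → t < (k : ℝ) + 1 →
      x t = x k * Real.exp (-(0.2) * (t - k)) := by
    intro k t hkt htk
    rcases eq_or_lt_of_le hkt with h | h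
    · rw [← h]; simp
    · set g : ℝ → ℝ := fun s => x s * Real.exp (0.2 * s) with hg
      have hderiv : ∀ s : ℝ, (k : ℝ) < s → s < (k : ℝ) + 1 → HasDerivAt g 0 s := by
        intro s hs1 hs2
        have hspos : (0 : ℝ) < s := lt_of_le_of_lt (Nat.cast_nonneg k) hs1
        have hsn : ∀ n : ℕ, s ≠ (n : ℝ) := by
          intro n hn
          subst hn
          have h1 : k < n := Nat.cast_lt.mp hs1
          have h2 : (n : ℝ) < k + 1 := hs2
          have : n < k + 1 := by exact_mod_cast h2
          omega
        have h1 := hode s hspos hsn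
        have h2 : HasDerivAt (fun u : ℝ => Real.exp (0.2 * u))
            (Real.exp (0.2 * s) * (0.2 * 1)) s :=
          ((hasDerivAt_id s).const_mul (0.2 : ℝ)).exp
        have := h1.mul h2
        exact this.congr_deriv (by ring)
      have hconst : ∀ a : ℝ, (k : ℝ) < a → a ≤ t → g t = g a := by
        intro a ha hat
        have hsub : Icc a t ⊆ Ico (k : ℝ) (k + 1) := fun s hs =>
          ⟨le_of_lt (lt_of_lt_of_le ha hs.1), lt_of_le_of_lt hs.2 htk⟩
        have hcg : ContinuousOn g (Icc a t) :=
          ((hcont k).mono hsub).mul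
            ((Real.continuous_exp.comp (continuous_const.mul continuous_id)).continuousOn)
        have hd : ∀ s ∈ Ico a t, HasDerivWithinAt g 0 (Ici s) s := by
          intro s hs
          exact (hderiv s (lt_of_lt_of_le ha hs.1) (lt_trans hs.2 htk)).hasDerivWithinAt
        exact constant_of_has_deriv_right_zero hcg hd t ⟨hat, le_refl t⟩
      have hne : ((k : ℝ)) < t := h
      haveI : (nhdsWithin (k : ℝ) (Ioo (k : ℝ) t)).NeBot := left_nhdsWithin_Ioo_neBot hne
      have h1 : Tendsto g (nhdsWithin (k : ℝ) (Ioo (k : ℝ) t)) (nhds (g k)) := by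
        have hc : ContinuousWithinAt g (Ico (k : ℝ) (k + 1)) k := by
          have := (hcont k k ⟨le_refl _, by linarith⟩)
          exact this.mul
            ((Real.continuous_exp.comp (continuous_const.mul continuous_id)).continuousWithinAt)
        exact hc.tendsto.mono_left (nhdsWithin_mono _ (fun s hs => ⟨le_of_lt hs.1, lt_of_lt_of_le hs.2 (le_of_lt htk)⟩))
      have h2 : Tendsto g (nhdsWithin (k : ℝ) (Ioo (k : ℝ) t)) (nhds (g t)) := by
        have hev : (fun _ : ℝ => g t) =ᶠ[nhdsWithin (k : ℝ) (Ioo (k : ℝ) t)] g := by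
          filter_upwards [self_mem_nhdsWithin] with a ha
          exact hconst a ha.1 (le_of_lt ha.2)
        exact Tendsto.congr' hev tendsto_const_nhds
      have hgt : g k = g t := tendsto_nhds_unique h1 h2
      have heq : x t * Real.exp (0.2 * t) = x k * Real.exp (0.2 * k) := hgt.symm
      have h6 : Real.exp (-(0.2) * (t - (k : ℝ))) * Real.exp (0.2 * t) = Real.exp (0.2 * k) := by
        rw [← Real.exp_add]
        congr 1
        ring
      refine mul_right_cancel₀ (Real.exp_ne_zero (0.2 * t)) ?_
      rw [heq, mul_assoc, h6]
  -- values at integers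
  have hrec : ∀ k : ℕ, x ((k : ℝ) + 1) =
      (if Odd (k + 1) then (2 : ℝ) else 0.6) * (x k * Real.exp (-(0.2))) := by
    intro k
    obtain ⟨L, hL, hxL⟩ := hjump (k + 1) (Nat.succ_pos k)
    have hcast : ((k + 1 : ℕ) : ℝ) = (k : ℝ) + 1 := by push_cast; ring
    rw [hcast] at hL hxL
    have hlim : Tendsto x (nhdsWithin ((k : ℝ) + 1) (Iio ((k : ℝ) + 1)))
        (nhds (x k * Real.exp (-(0.2)))) := by
      have hmem : Ioo (k : ℝ) ((k : ℝ) + 1) ∈ nhdsWithin ((k : ℝ) + 1) (Iio ((k : ℝ) + 1)) :=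
        Ioo_mem_nhdsLT (by linarith)
      have hf : Tendsto (fun s : ℝ => x k * Real.exp (-(0.2) * (s - k)))
          (nhdsWithin ((k : ℝ) + 1) (Iio ((k : ℝ) + 1))) (nhds (x k * Real.exp (-(0.2)))) := by
        have hc : ContinuousAt (fun s : ℝ => x k * Real.exp (-(0.2) * (s - k))) ((k : ℝ) + 1) := by
          fun_prop
        have h8 := hc.tendsto.mono_left (nhdsWithin_le_nhds
          (s := Iio ((k : ℝ) + 1)))
        have h9 : -(0.2 : ℝ) * (((k : ℝ) + 1) - (k : ℝ)) = -(0.2) := by ring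
        rw [h9] at h8
        exact h8
      apply hf.congr'
      filter_upwards [hmem] with s hs
      exact (key k s (le_of_lt hs.1) hs.2).symm
    have hLeq : L = x k * Real.exp (-(0.2)) := tendsto_nhds_unique hL hlim
    rw [hxL, hLeq]
  -- recurrence in ℕ form
  set X : ℕ → ℝ := fun n => x n with hX
  have hrec' : ∀ k : ℕ, X (k + 1) =
      (if Odd (k + 1) then (2 : ℝ) else 0.6) * (X k * Real.exp (-(0.2))) := by
    intro k
    have hcast : ((k + 1 : ℕ) : ℝ) = (k : ℝ) + 1 := by push_cast; ring
    simp only [hX, hcast]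
    exact hrec k
  have hX0 : X 0 = x₀ := by simp [hX, hx0]
  have heven : ∀ m : ℕ, X (2 * m) = r ^ m * x₀ := by
    intro m
    induction m with
    | zero => simpa using hX0
    | succ m ih =>
      have hodd1 : Odd (2 * m + 1) := ⟨m, by ring⟩
      have heven2 : ¬ Odd (2 * m + 1 + 1) := by simp [Nat.odd_add_one, hodd1]
      have e1 : X (2 * m + 1) = 2 * (X (2 * m) * Real.exp (-(0.2))) := by
        rw [hrec' (2 * m), if_pos hodd1]
      have e2 : X (2 * m + 1 + 1) = 0.6 * (X (2 * m + 1) * Real.exp (-(0.2))) := by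
        rw [hrec' (2 * m + 1), if_neg heven2]
      have hee : Real.exp (-(0.2)) * Real.exp (-(0.2)) = Real.exp (-(0.4)) := by
        rw [← Real.exp_add]; norm_num
      have h2m : 2 * (m + 1) = 2 * m + 1 + 1 := by ring
      have hcalc : (0.6 : ℝ) * (2 * (r ^ m * x₀ * Real.exp (-(0.2))) * Real.exp (-(0.2)))
          = 1.2 * (Real.exp (-(0.2)) * Real.exp (-(0.2))) * (r ^ m * x₀) := by ring
      rw [h2m, e2, e1, ih, hcalc, hee, ← hrdef, pow_succ]
      ring
  have hodd : ∀ m : ℕ, X (2 * m + 1) = 2 * Real.exp (-(0.2)) * (r ^ m * x₀) := by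
    intro m
    have hodd1 : Odd (2 * m + 1) := ⟨m, by ring⟩
    rw [hrec' (2 * m), if_pos hodd1, heven m]
    ring
  have hexple : Real.exp (-(0.2)) ≤ 1 := by
    rw [← Real.exp_zero]
    exact Real.exp_le_exp.mpr (by norm_num)
  have hXnn : ∀ n : ℕ, 0 ≤ X n := by
    intro n
    rcases Nat.even_or_odd n with ⟨m, hm⟩ | ⟨m, hm⟩
    · rw [show n = 2 * m by omega, heven m]; positivity
    · rw [show n = 2 * m + 1 by omega, hodd m]; positivity
  have hXle : ∀ n : ℕ, X n ≤ 2 * r ^ (n / 2) * x₀ := by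
    intro n
    rcases Nat.even_or_odd n with ⟨m, hm⟩ | ⟨m, hm⟩
    · have hdd : 2 * m / 2 = m := by omega
      rw [show n = 2 * m by omega, heven m, hdd]
      nlinarith [mul_nonneg (pow_nonneg hr0 m) hx0nn]
    · have hdd : (2 * m + 1) / 2 = m := by omega
      rw [show n = 2 * m + 1 by omega, hodd m, hdd]
      nlinarith [pow_nonneg hr0 m, Real.exp_pos (-(0.2 : ℝ)), mul_nonneg (pow_nonneg hr0 m) hx0nn]
  -- pointwise bounds for t ≥ 0
  have hbound : ∀ t : ℝ, 0 ≤ t → 0 ≤ x t ∧ x t ≤ 2 * r ^ (⌊t⌋₊ / 2) * x₀ := by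
    intro t ht
    set k := ⌊t⌋₊ with hk
    have h1 : (k : ℝ) ≤ t := Nat.floor_le ht
    have h2 : t < (k : ℝ) + 1 := Nat.lt_floor_add_one t
    have hxt := key k t h1 h2
    have hXk : x (k : ℝ) = X k := rfl
    have hexp1 : Real.exp (-(0.2) * (t - k)) ≤ 1 := by
      rw [← Real.exp_zero]
      apply Real.exp_le_exp.mpr
      nlinarith
    constructor
    · rw [hxt, hXk]
      exact mul_nonneg (hXnn k) (Real.exp_pos _).le
    · calc x t = X k * Real.exp (-(0.2) * (t - k)) := by rw [hxt, hXk]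
        _ ≤ X k * 1 := mul_le_mul_of_nonneg_left hexp1 (hXnn k)
        _ = X k := mul_one _
        _ ≤ 2 * r ^ (k / 2) * x₀ := hXle k
  -- upper bound tends to 0
  have hfloor : Tendsto (fun t : ℝ => ⌊t⌋₊) atTop atTop := tendsto_nat_floor_atTop
  have hdiv2 : Tendsto (fun n : ℕ => n / 2) atTop atTop := by
    apply tendsto_atTop_atTop.mpr
    intro b
    exact ⟨2 * b, fun a ha => by omega⟩
  have hpow : Tendsto (fun n : ℕ => r ^ n) atTop (nhds 0) :=
    tendsto_pow_atTop_nhds_zero_of_lt_one hr0 hr1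
  have hupper : Tendsto (fun t : ℝ => 2 * r ^ (⌊t⌋₊ / 2) * x₀) atTop (nhds 0) := by
    have := ((hpow.comp (hdiv2.comp hfloor)).const_mul 2).mul_const x₀
    simpa using this
  apply tendsto_of_tendsto_of_tendsto_of_le_of_le' tendsto_const_nhds hupper
  · filter_upwards [eventually_ge_atTop (0 : ℝ)] with t ht
    exact (hbound t ht).1
  · filter_upwards [eventually_ge_atTop (0 : ℝ)] with t ht
    exact (hbound t ht).2
end

section
/- Let v : [t₀,∞) → ℝ≥0 be absolutely continuous on each interval between impulse times, satisfy v'(t) ≤ -c·v(t) almost everywhere between impulses, and satisfy v(τ) ≤ e^{-d_i}·v(τ⁻) at each impulse time τ of the i-th sequence (sequences pairwise disjoint, each strictly increasing with no finite accumulation point). Then for all t ≥ s ≥ t₀, v(t) ≤ v(s)·exp(-c(t-s) - ∑_{i=1}^p d_i·N_i(t,s)), where N_i(t,s) counts impulse times of sequence i in (s,t]. -/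
open Filter Set

/-- Per-interval decay estimate for a candidate exponential ISS-Lyapunov function:
flow decay at rate `c` between impulses and multiplicative factors `e^{-dᵢ}` at impulses
of the `i`-th sequence compose to the stated bound, where `Nᵢ(t,s)` counts impulse times
of sequence `i` in `(s,t]`. -/
theorem stmt3 (p : ℕ) (c : ℝ) (d : Fin p → ℝ) (t₀ : ℝ)
    (T : Fin p → ℕ → ℝ)
    (hTmono : ∀ i, StrictMono (T i))
    (hTgt : ∀ i k, t₀ < T i k)
    (hTdisj : ∀ i j, i ≠ j → ∀ k l, T i k ≠ T j l)
    (hTtop : ∀ i, Tendsto (T i) atTop atTop)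
    (v : ℝ → ℝ) (hvnn : ∀ t, 0 ≤ v t)
    (hright : ∀ t : ℝ, t₀ ≤ t → ContinuousWithinAt v (Set.Ici t) t)
    (hcont : ∀ t : ℝ, t₀ < t → (∀ i k, t ≠ T i k) → ContinuousAt v t)
    (hflow : ∀ t : ℝ, t₀ < t → (∀ i k, t ≠ T i k) →
      ∃ v' : ℝ, HasDerivAt v v' t ∧ v' ≤ -c * v t)
    (hjump : ∀ i k, ∃ L : ℝ,
      Tendsto v (nhdsWithin (T i k) (Set.Iio (T i k))) (nhds L) ∧
      v (T i k) ≤ Real.exp (-(d i)) * L) :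
    ∀ s t : ℝ, t₀ ≤ s → s ≤ t →
      v t ≤ v s * Real.exp (-c * (t - s)
        - ∑ i, d i * (({k : ℕ | T i k ∈ Set.Ioc s t}.ncard : ℝ))) := by
  -- finiteness of the index sets
  have hfinIdx : ∀ (i : Fin p) (a b : ℝ), {k : ℕ | T i k ∈ Set.Ioc a b}.Finite := by
    intro i a b
    obtain ⟨N, hN⟩ := eventually_atTop.mp ((hTtop i).eventually (eventually_gt_atTop b))
    refine Set.Finite.subset (Set.finite_Iio N) ?_
    intro k hk
    simp only [Set.mem_Iio]
    by_contra h
    push_neg at h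
    exact absurd hk.2 (not_le.mpr (hN k h))
  -- finiteness of the set of impulse times in an interval
  have hfinS : ∀ a b : ℝ, {x : ℝ | x ∈ Set.Ioc a b ∧ ∃ i k, x = T i k}.Finite := by
    intro a b
    refine Set.Finite.subset (Set.finite_iUnion fun i => (hfinIdx i a b).image (T i)) ?_
    rintro x ⟨hx, i, k, rfl⟩
    exact Set.mem_iUnion.mpr ⟨i, ⟨k, hx, rfl⟩⟩
  -- Gronwall-type decay on impulse-free intervals
  have gron : ∀ a b : ℝ, t₀ ≤ a → a ≤ b → (∀ x ∈ Set.Ioc a b, ∀ i k, x ≠ T i k) →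
      v b ≤ v a * Real.exp (-c * (b - a)) := by
    intro a b ha hab hno
    rcases eq_or_lt_of_le hab with rfl | hab'
    · simp
    set w : ℝ → ℝ := fun x => v x * Real.exp (c * x) with hw
    have hcv : ContinuousOn v (Set.Icc a b) := by
      intro x hx
      rcases eq_or_lt_of_le hx.1 with heq | hax
      · rw [← heq]; exact (hright a ha).mono Set.Icc_subset_Ici_self
      · exact (hcont x (lt_of_le_of_lt ha hax) (hno x ⟨hax, hx.2⟩)).continuousWithinAt
    have hcw : ContinuousOn w (Set.Icc a b) :=
      hcv.mul (Real.continuous_exp.comp (continuous_const.mul continuous_id)).continuousOn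
    have hder : ∀ x ∈ Set.Ioo a b, ∃ W : ℝ, HasDerivAt w W x ∧ W ≤ 0 := by
      intro x hx
      have hx0 : t₀ < x := lt_of_le_of_lt ha hx.1
      obtain ⟨v', hv', hle⟩ := hflow x hx0 (hno x ⟨hx.1, hx.2.le⟩)
      have he : HasDerivAt (fun x : ℝ => Real.exp (c * x)) (Real.exp (c * x) * c) x := by
        have h := (Real.hasDerivAt_exp (c * x)).comp x ((hasDerivAt_id x).const_mul c)
        simp only [mul_one] at h
        exact h
      refine ⟨v' * Real.exp (c * x) + v x * (Real.exp (c * x) * c), hv'.mul he, ?_⟩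
      have hepos := Real.exp_pos (c * x)
      nlinarith [mul_le_mul_of_nonneg_right hle hepos.le]
    have hdiff : DifferentiableOn ℝ w (interior (Set.Icc a b)) := by
      rw [interior_Icc]
      intro x hx
      obtain ⟨W, hW, _⟩ := hder x hx
      exact hW.differentiableAt.differentiableWithinAt
    have hderiv : ∀ x ∈ interior (Set.Icc a b), deriv w x ≤ 0 := by
      rw [interior_Icc]
      intro x hx
      obtain ⟨W, hW, hW0⟩ := hder x hx
      rw [hW.deriv]; exact hW0
    have hanti : AntitoneOn w (Set.Icc a b) :=
      antitoneOn_of_deriv_nonpos (convex_Icc a b) hcw hdiff hderiv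
    have hwba : w b ≤ w a := hanti (Set.left_mem_Icc.mpr hab) (Set.right_mem_Icc.mpr hab) hab
    have h2 : v b = v b * Real.exp (c * b) * Real.exp (-(c * b)) := by
      rw [mul_assoc, ← Real.exp_add]; simp
    rw [h2]
    calc v b * Real.exp (c * b) * Real.exp (-(c * b))
        ≤ v a * Real.exp (c * a) * Real.exp (-(c * b)) :=
          mul_le_mul_of_nonneg_right hwba (Real.exp_nonneg _)
      _ = v a * Real.exp (-c * (b - a)) := by
          rw [mul_assoc, ← Real.exp_add]; congr 1; ring
  -- base case: no impulses in (a, b]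
  have base : ∀ a b : ℝ, t₀ ≤ a → a ≤ b →
      {x : ℝ | x ∈ Set.Ioc a b ∧ ∃ i k, x = T i k} = ∅ →
      v b ≤ v a * Real.exp (-c * (b - a)
        - ∑ i, d i * (({k : ℕ | T i k ∈ Set.Ioc a b}.ncard : ℝ))) := by
    intro a b ha hab hS
    have hno : ∀ x ∈ Set.Ioc a b, ∀ i k, x ≠ T i k := by
      intro x hx i k hxT
      exact (Set.eq_empty_iff_forall_notMem.mp hS x) ⟨hx, i, k, hxT⟩
    have hempty : ∀ i : Fin p, {k : ℕ | T i k ∈ Set.Ioc a b} = ∅ := by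
      intro i
      ext k
      simp only [Set.mem_setOf_eq, Set.mem_empty_iff_false, iff_false]
      intro hk
      exact hno (T i k) hk i k rfl
    have : ∑ i, d i * (({k : ℕ | T i k ∈ Set.Ioc a b}.ncard : ℝ)) = 0 := by
      apply Finset.sum_eq_zero
      intro i _
      rw [hempty i]
      simp
    rw [this, sub_zero]
    exact gron a b ha hab hno
  -- main induction on the number of impulse times in (a, b]
  have key : ∀ n : ℕ, ∀ a b : ℝ, t₀ ≤ a → a ≤ b →
      {x : ℝ | x ∈ Set.Ioc a b ∧ ∃ i k, x = T i k}.ncard ≤ n →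
      v b ≤ v a * Real.exp (-c * (b - a)
        - ∑ i, d i * (({k : ℕ | T i k ∈ Set.Ioc a b}.ncard : ℝ))) := by
    intro n
    induction n with
    | zero =>
      intro a b ha hab hcard
      apply base a b ha hab
      have := Nat.le_zero.mp hcard
      exact (Set.ncard_eq_zero (hfinS a b)).mp this
    | succ n ih =>
      intro a b ha hab hcard
      set S := {x : ℝ | x ∈ Set.Ioc a b ∧ ∃ i k, x = T i k} with hSdef
      rcases Set.eq_empty_or_nonempty S with hS | hS
      · exact base a b ha hab hS
      · -- there is at least one impulse time in (a, b]; take the largest one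
        have hSfin : S.Finite := hfinS a b
        have hbdd : BddAbove S := hSfin.bddAbove
        set τ := sSup S with hτdef
        have hτS : τ ∈ S := hS.csSup_mem hSfin
        obtain ⟨⟨haτ, hτb⟩, i₀, k₀, hτT⟩ := hτS
        have hτmax : ∀ x ∈ S, x ≤ τ := fun x hx => le_csSup hbdd hx
        -- pick u with a ≤ m < u < τ, where m bounds all other impulse times
        have hB : BddAbove (insert a (S \ {τ})) :=
          ((hSfin.subset Set.diff_subset).insert a).bddAbove
        set m := sSup (insert a (S \ {τ})) with hmdef
        have ham : a ≤ m := le_csSup hB (Set.mem_insert a _)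
        have hyle : ∀ y ∈ S \ {τ}, y ≤ m := fun y hy => le_csSup hB (Set.mem_insert_of_mem _ hy)
        have hmτ : m < τ := by
          rw [hmdef]
          refine (Set.Finite.csSup_lt_iff ((hSfin.subset Set.diff_subset).insert a) ⟨a, Set.mem_insert a _⟩).mpr ?_
          rintro x (rfl | ⟨hxS, hxne⟩)
          · exact haτ
          · exact lt_of_le_of_ne (hτmax x hxS) hxne
        obtain ⟨u, hmu, huτ⟩ := exists_between hmτ
        have hau : a < u := lt_of_le_of_lt ham hmu
        have hub : u ≤ b := le_of_lt (lt_of_lt_of_le huτ hτb)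
        -- constant part of the exponent
        set C := ∑ i, d i * (({k : ℕ | T i k ∈ Set.Ioc a u}.ncard : ℝ)) with hCdef
        -- index sets are stable on [u, τ)
        have hIdxEq : ∀ x ∈ Set.Ico u τ, ∀ i : Fin p,
            {k : ℕ | T i k ∈ Set.Ioc a x} = {k : ℕ | T i k ∈ Set.Ioc a u} := by
          intro x hx i
          ext k
          simp only [Set.mem_setOf_eq, Set.mem_Ioc]
          constructor
          · rintro ⟨hak, hkx⟩
            refine ⟨hak, ?_⟩
            have hkτ : T i k < τ := lt_of_le_of_lt hkx hx.2
            have hkS : T i k ∈ S \ {τ} :=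
              ⟨⟨⟨hak, le_trans hkτ.le hτb⟩, i, k, rfl⟩, ne_of_lt hkτ⟩
            exact le_of_lt (lt_of_le_of_lt (hyle _ hkS) hmu)
          · rintro ⟨hak, hku⟩
            exact ⟨hak, le_trans hku hx.1⟩
        -- the impulse-time set over (a, x] for x ∈ [u, τ) is S \ {τ}
        have hSx : ∀ x ∈ Set.Ico u τ,
            {y : ℝ | y ∈ Set.Ioc a x ∧ ∃ i k, y = T i k} = S \ {τ} := by
          intro x hx
          ext y
          simp only [Set.mem_setOf_eq, Set.mem_diff, Set.mem_singleton_iff]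
          constructor
          · rintro ⟨⟨hay, hyx⟩, i, k, rfl⟩
            have hyτ : T i k < τ := lt_of_le_of_lt hyx hx.2
            exact ⟨⟨⟨hay, le_trans hyτ.le hτb⟩, i, k, rfl⟩, ne_of_lt hyτ⟩
          · rintro ⟨hyS, hyne⟩
            have hym : y ≤ m := hyle y ⟨hyS, hyne⟩
            exact ⟨⟨hyS.1.1, le_trans hym (le_trans hmu.le hx.1)⟩, hyS.2⟩
        have hcard' : (S \ {τ}).ncard ≤ n := by
          have h1 : (S \ {τ}).ncard = S.ncard - 1 :=
            Set.ncard_diff_singleton_of_mem (s := S) ⟨⟨haτ, hτb⟩, i₀, k₀, hτT⟩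
          have h2 : 0 < S.ncard := (Set.ncard_pos hSfin).mpr hS
          omega
        -- bound on v on [u, τ) from the induction hypothesis
        have hbx : ∀ x ∈ Set.Ico u τ, v x ≤ v a * Real.exp (-c * (x - a) - C) := by
          intro x hx
          have hax : a ≤ x := le_trans hau.le hx.1
          have := ih a x ha hax (by rw [hSx x hx]; exact hcard')
          simp only [hIdxEq x hx] at this
          exact this
        -- the left limit at τ
        obtain ⟨L, hLlim, hjineq⟩ := hjump i₀ k₀
        rw [← hτT] at hLlim hjineq
        have hL : L ≤ v a * Real.exp (-c * (τ - a) - C) := by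
          have hmem : Set.Iio τ ∩ Set.Ici u ∈ nhdsWithin τ (Set.Iio τ) :=
            Filter.inter_mem self_mem_nhdsWithin
              (mem_nhdsWithin_of_mem_nhds (Ici_mem_nhds huτ))
          have hev : ∀ᶠ x in nhdsWithin τ (Set.Iio τ),
              v x ≤ v a * Real.exp (-c * (x - a) - C) := by
            filter_upwards [hmem] with x hx
            exact hbx x ⟨hx.2, hx.1⟩
          have hg : Tendsto (fun x => v a * Real.exp (-c * (x - a) - C))
              (nhdsWithin τ (Set.Iio τ)) (nhds (v a * Real.exp (-c * (τ - a) - C))) := by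
            refine (Continuous.tendsto ?_ τ).mono_left nhdsWithin_le_nhds
            fun_prop
          exact le_of_tendsto_of_tendsto hLlim hg hev
        -- no impulses in (τ, b]
        have hnoafter : ∀ x ∈ Set.Ioc τ b, ∀ i k, x ≠ T i k := by
          rintro x hx i k rfl
          exact absurd (hτmax _ ⟨⟨lt_trans haτ hx.1, hx.2⟩, i, k, rfl⟩) (not_le.mpr hx.1)
        have hgb : v b ≤ v τ * Real.exp (-c * (b - τ)) :=
          gron τ b (le_trans ha haτ.le) hτb hnoafter
        -- counting: the index sets over (a, b]
        have hcount : ∀ i : Fin p, ({k : ℕ | T i k ∈ Set.Ioc a b}.ncard : ℝ) =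
            ({k : ℕ | T i k ∈ Set.Ioc a u}.ncard : ℝ) + if i = i₀ then 1 else 0 := by
          intro i
          by_cases hi : i = i₀
          · subst hi
            have hset : {k : ℕ | T i k ∈ Set.Ioc a b}
                = insert k₀ {k : ℕ | T i k ∈ Set.Ioc a u} := by
              ext k
              simp only [Set.mem_setOf_eq, Set.mem_insert_iff, Set.mem_Ioc]
              constructor
              · rintro ⟨hak, hkb⟩
                rcases eq_or_ne (T i k) τ with heq | hne
                · left
                  exact (hTmono i).injective (heq.trans hτT)
                · right
                  have hkS : T i k ∈ S \ {τ} := ⟨⟨⟨hak, hkb⟩, i, k, rfl⟩, hne⟩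
                  exact ⟨hak, le_of_lt (lt_of_le_of_lt (hyle _ hkS) hmu)⟩
              · rintro (rfl | ⟨hak, hku⟩)
                · rw [← hτT]; exact ⟨haτ, hτb⟩
                · exact ⟨hak, le_trans hku hub⟩
            have hk₀ : k₀ ∉ {k : ℕ | T i k ∈ Set.Ioc a u} := by
              intro hmem
              have h1 : T i k₀ ≤ u := hmem.2
              rw [← hτT] at h1
              exact absurd h1 (not_le.mpr huτ)
            rw [hset, Set.ncard_insert_of_notMem hk₀ (hfinIdx i a u)]
            simp [Nat.cast_add]
          · have hset : {k : ℕ | T i k ∈ Set.Ioc a b} = {k : ℕ | T i k ∈ Set.Ioc a u} := by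
              ext k
              simp only [Set.mem_setOf_eq, Set.mem_Ioc]
              constructor
              · rintro ⟨hak, hkb⟩
                have hne : T i k ≠ τ := hτT ▸ hTdisj i i₀ hi k k₀
                have hkS : T i k ∈ S \ {τ} := ⟨⟨⟨hak, hkb⟩, i, k, rfl⟩, hne⟩
                exact ⟨hak, le_of_lt (lt_of_le_of_lt (hyle _ hkS) hmu)⟩
              · rintro ⟨hak, hku⟩
                exact ⟨hak, le_trans hku hub⟩
            rw [hset]
            simp [hi]
        -- the sum over (a, b]
        have hsum : ∑ i, d i * (({k : ℕ | T i k ∈ Set.Ioc a b}.ncard : ℝ)) = C + d i₀ := by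
          simp only [hcount, mul_add, Finset.sum_add_distrib, mul_ite, mul_one, mul_zero]
          congr 1
          rw [Finset.sum_ite_eq' Finset.univ i₀ d]
          simp
        -- combine everything
        rw [hsum]
        calc v b ≤ v τ * Real.exp (-c * (b - τ)) := hgb
          _ ≤ (Real.exp (-(d i₀)) * L) * Real.exp (-c * (b - τ)) :=
              mul_le_mul_of_nonneg_right hjineq (Real.exp_nonneg _)
          _ ≤ (Real.exp (-(d i₀)) * (v a * Real.exp (-c * (τ - a) - C)))
                * Real.exp (-c * (b - τ)) :=
              mul_le_mul_of_nonneg_right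
                (mul_le_mul_of_nonneg_left hL (Real.exp_nonneg _)) (Real.exp_nonneg _)
          _ = v a * Real.exp (-c * (b - a) - (C + d i₀)) := by
              rw [show Real.exp (-(d i₀)) * (v a * Real.exp (-c * (τ - a) - C))
                    * Real.exp (-c * (b - τ))
                  = v a * (Real.exp (-(d i₀)) * Real.exp (-c * (τ - a) - C)
                    * Real.exp (-c * (b - τ))) by ring]
              rw [← Real.exp_add, ← Real.exp_add]
              congr 2
              ring
  intro s t hs hst
  exact key _ s t hs hst le_rfl
end

section
/- Let T₁ = {1,3,5,…} and T₂ = {2,4,6,…}. For c = 0.2, d₁ = -ln 2, d₂ = -ln 0.6, λ = 0.1, μ = ln 2, the dwell-time condition -d₁·N₁(t,s) - d₂·N₂(t,s) - (c-λ)(t-s) ≤ μ holds for all real t ≥ s ≥ 0, where N_i(t,s) is the number of elements of T_i in (s,t]. -/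
open Set

lemma oddEvenCount (a : ℕ) : ∀ b, a ≤ b →
    ((Finset.Ioc a b).filter (fun n => Odd n)).card = (b+1)/2 - (a+1)/2 ∧
    ((Finset.Ioc a b).filter (fun n => Even n)).card = b/2 - a/2 := by
  intro b
  induction b with
  | zero => intro h; interval_cases a <;> simp
  | succ b ih =>
    intro h
    rcases Nat.lt_or_ge a (b+1) with h' | h'
    · have hab : a ≤ b := by omega
      obtain ⟨h1, h2⟩ := ih hab
      have hins : Finset.Ioc a (b+1) = insert (b+1) (Finset.Ioc a b) := by
        ext x; simp [Finset.mem_Ioc]; omega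
      rw [hins]
      rw [Finset.filter_insert, Finset.filter_insert]
      have hnot : (b+1) ∉ Finset.Ioc a b := by simp
      rcases Nat.even_or_odd (b+1) with he | ho
      · have hno : ¬ Odd (b+1) := Nat.not_odd_iff_even.mpr he
        rw [if_neg hno, if_pos he, Finset.card_insert_of_notMem (by simp [hnot])]
        rw [h1, h2]
        have := Nat.even_iff.mp he
        constructor <;> omega
      · have hne : ¬ Even (b+1) := Nat.not_even_iff_odd.mpr ho
        rw [if_pos ho, if_neg hne, Finset.card_insert_of_notMem (by simp [hnot])]
        rw [h1, h2]
        have := Nat.odd_iff.mp ho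
        constructor <;> omega
    · have : a = b + 1 := by omega
      subst this; simp

lemma logSumLe : Real.log 2 + Real.log 0.6 ≤ 0.2 := by
  have h : Real.log 2 + Real.log 0.6 = Real.log 1.2 := by
    rw [← Real.log_mul (by norm_num) (by norm_num)]; norm_num
  rw [h]
  have := Real.add_one_le_exp (0.2 : ℝ)
  have h2 : (1.2:ℝ) ≤ Real.exp 0.2 := by linarith
  calc Real.log 1.2 ≤ Real.log (Real.exp 0.2) := Real.log_le_log (by norm_num) h2
    _ = 0.2 := Real.log_exp _

/-- Dwell-time condition verification for Example 1: with `c = 0.2`, `d₁ = -ln 2`,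
`d₂ = -ln 0.6`, `λ = 0.1`, `μ = ln 2`, the condition holds for all `t ≥ s ≥ 0`,
where `N₁` counts odd and `N₂` even positive integers in `(s,t]`. -/
theorem stmt4 :
    ∀ s t : ℝ, 0 ≤ s → s ≤ t →
      -(-Real.log 2) * (({n : ℕ | 0 < n ∧ Odd n ∧ (n : ℝ) ∈ Set.Ioc s t}.ncard : ℝ))
      - (-Real.log 0.6) * (({n : ℕ | 0 < n ∧ Even n ∧ (n : ℝ) ∈ Set.Ioc s t}.ncard : ℝ))
      - (0.2 - 0.1) * (t - s) ≤ Real.log 2 := by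
  intro s t hs hst
  have ht : (0:ℝ) ≤ t := le_trans hs hst
  set a := ⌊s⌋₊ with ha
  set b := ⌊t⌋₊ with hb
  have hab : a ≤ b := Nat.floor_mono hst
  have hconv : ∀ (P : ℕ → Prop) [DecidablePred P],
      {n : ℕ | 0 < n ∧ P n ∧ (n : ℝ) ∈ Set.Ioc s t}
        = ↑((Finset.Ioc a b).filter (fun n => P n)) := by
    intro P _
    ext n
    simp only [Set.mem_setOf_eq, Finset.coe_filter, Finset.mem_Ioc, Set.mem_Ioc]
    constructor
    · rintro ⟨hn, hP, h1, h2⟩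
      exact ⟨⟨(Nat.floor_lt hs).mpr h1, Nat.le_floor h2⟩, hP⟩
    · rintro ⟨⟨h1, h2⟩, hP⟩
      refine ⟨by omega, hP, (Nat.floor_lt hs).mp h1, (Nat.le_floor_iff ht).mp h2⟩
  rw [hconv (fun n => Odd n), hconv (fun n => Even n), Set.ncard_coe_finset,
    Set.ncard_coe_finset]
  obtain ⟨ho, he⟩ := oddEvenCount a b hab
  set m := ((Finset.Ioc a b).filter (fun n => Odd n)).card with hm
  set k := ((Finset.Ioc a b).filter (fun n => Even n)).card with hk
  have hmk : m + k = b - a := by omega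
  have hm1 : m ≤ k + 1 := by omega
  -- cast facts
  have hMK : (m:ℝ) + (k:ℝ) = (b:ℝ) - (a:ℝ) := by
    have h0 : ((m + k : ℕ) : ℝ) = ((b - a : ℕ) : ℝ) := by rw [hmk]
    push_cast [Nat.cast_sub hab] at h0
    linarith
  have hM1 : (m:ℝ) ≤ (k:ℝ) + 1 := by exact_mod_cast hm1
  have hbt : (b:ℝ) ≤ t := Nat.floor_le ht
  have hsa : s < (a:ℝ) + 1 := Nat.lt_floor_add_one s
  have hts : (m:ℝ) + (k:ℝ) - 1 ≤ t - s := by linarith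
  have hK : (0:ℝ) ≤ (k:ℝ) := Nat.cast_nonneg k
  have hL2 : (0.69:ℝ) ≤ Real.log 2 := le_of_lt (by linarith [Real.log_two_gt_d9])
  have hsum := logSumLe
  nlinarith [mul_nonneg (by linarith : (0:ℝ) ≤ Real.log 2 - 0.1)
      (by linarith : (0:ℝ) ≤ (k:ℝ) + 1 - (m:ℝ)),
    mul_nonneg (by linarith : (0:ℝ) ≤ 0.2 - Real.log 2 - Real.log 0.6) hK]
end

section
/- Suppose a,b ∈ ℝ≥0, ĥ ∈ ℝ, γ₁₂ > 0, s₁ > 0, u ≥ 0, and let V := max{a/s₁, b}. If a' ≤ max{e^{-ĥ}·a, γ₁₂·b, u} then max{a'/s₁, b} ≤ max{e^{-d}·V, u/s₁}, where d := min{ĥ, -ln(γ₁₂/s₁), -ε} for any ε > 0. -/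
/-- Key jump estimate in the proof of Theorem 2 for the jump map `g₁`:
here `dhat` plays the role of `d̂₁` and `d := min {dhat, -ln(γ₁₂/s₁), -ε}`. -/
theorem stmt8 (a b a' u dhat γ₁₂ s₁ ε : ℝ)
    (ha : 0 ≤ a) (hb : 0 ≤ b) (hu : 0 ≤ u)
    (hγ : 0 < γ₁₂) (hs : 0 < s₁) (hε : 0 < ε)
    (hjump : a' ≤ max (max (Real.exp (-dhat) * a) (γ₁₂ * b)) u) :
    max (a' / s₁) b ≤
      max (Real.exp (-(min (min dhat (-Real.log (γ₁₂ / s₁))) (-ε))) *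
        max (a / s₁) b) (u / s₁) := by
  set d : ℝ := min (min dhat (-Real.log (γ₁₂ / s₁))) (-ε) with hd
  set E : ℝ := Real.exp (-d) with hE
  have hd1 : d ≤ dhat := le_trans (min_le_left _ _) (min_le_left _ _)
  have hd2 : d ≤ -Real.log (γ₁₂ / s₁) := le_trans (min_le_left _ _) (min_le_right _ _)
  have hd3 : d ≤ -ε := min_le_right _ _
  have hE1 : 1 ≤ E := Real.one_le_exp (by linarith)
  have hE2 : Real.exp (-dhat) ≤ E := Real.exp_le_exp.2 (by linarith)
  have hE3 : γ₁₂ / s₁ ≤ E := by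
    calc γ₁₂ / s₁ = Real.exp (Real.log (γ₁₂ / s₁)) :=
          (Real.exp_log (div_pos hγ hs)).symm
      _ ≤ E := Real.exp_le_exp.2 (by linarith)
  have hV : 0 ≤ max (a / s₁) b := le_max_of_le_right hb
  refine max_le ?_ ?_
  · rw [div_le_iff₀ hs]
    have h1 : Real.exp (-dhat) * a ≤ E * max (a / s₁) b * s₁ := by
      have : a / s₁ ≤ max (a / s₁) b := le_max_left _ _
      have haa : a ≤ max (a / s₁) b * s₁ := by
        rw [← div_le_iff₀ hs]; exact this
      calc Real.exp (-dhat) * a ≤ E * (max (a / s₁) b * s₁) := by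
            apply mul_le_mul hE2 haa ha (le_trans zero_le_one hE1)
        _ = E * max (a / s₁) b * s₁ := by ring
    have h2 : γ₁₂ * b ≤ E * max (a / s₁) b * s₁ := by
      have hbb : b ≤ max (a / s₁) b := le_max_right _ _
      calc γ₁₂ * b = (γ₁₂ / s₁) * b * s₁ := by field_simp
        _ ≤ E * max (a / s₁) b * s₁ := by
            apply mul_le_mul_of_nonneg_right _ hs.le
            exact mul_le_mul hE3 hbb hb (le_trans zero_le_one hE1)
    have h3 : u ≤ u / s₁ * s₁ := by rw [div_mul_cancel₀ _ hs.ne']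
    calc a' ≤ max (max (Real.exp (-dhat) * a) (γ₁₂ * b)) u := hjump
      _ ≤ max (E * max (a / s₁) b) (u / s₁) * s₁ := by
          rw [max_mul_of_nonneg _ _ hs.le]
          exact max_le (max_le (le_max_of_le_left h1) (le_max_of_le_left h2))
            (le_max_of_le_right h3)
  · refine le_max_of_le_left ?_
    calc b ≤ max (a / s₁) b := le_max_right _ _
      _ = 1 * max (a / s₁) b := (one_mul _).symm
      _ ≤ E * max (a / s₁) b := mul_le_mul_of_nonneg_right hE1 hV
end

section
/- There exists λ > 0 and μ = ln 3 such that ln 3·N₁(t,s) + ln 2·N₂(t,s) - (1-λ)(t-s) ≤ μ for all real t ≥ s ≥ 0, where N₁(t,s) counts odd positive integers in (s,t] and N₂(t,s) counts even positive integers in (s,t]. -/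
open Set

lemma even_card (a b : ℕ) (h : a ≤ b) :
    ((Finset.Ioc a b).filter (fun n => Even n)).card = b / 2 - a / 2 := by
  have hb := Nat.Ioc_filter_dvd_card_eq_div b 2
  have ha := Nat.Ioc_filter_dvd_card_eq_div a 2
  have hsplit : Finset.Ioc 0 a ∪ Finset.Ioc a b = Finset.Ioc 0 b := by
    exact Finset.Ioc_union_Ioc_eq_Ioc (Nat.zero_le a) h
  have hdisj : Disjoint (Finset.Ioc 0 a) (Finset.Ioc a b) := by
    simp [Finset.disjoint_left]
    omega
  have : ((Finset.Ioc 0 a).filter (fun n => 2 ∣ n)).card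
      + ((Finset.Ioc a b).filter (fun n => 2 ∣ n)).card
      = ((Finset.Ioc 0 b).filter (fun n => 2 ∣ n)).card := by
    rw [← hsplit, Finset.filter_union, Finset.card_union_of_disjoint]
    exact Finset.disjoint_filter_filter hdisj
  have heq : (Finset.Ioc a b).filter (fun n => Even n) = (Finset.Ioc a b).filter (fun n => 2 ∣ n) := by
    apply Finset.filter_congr; intro x _; exact even_iff_two_dvd
  rw [heq]
  simp only [Nat.Ioc_filter_dvd_card_eq_div] at this ⊢
  omega

lemma odd_card (a b : ℕ) (h : a ≤ b) :
    ((Finset.Ioc a b).filter (fun n => Odd n)).card = (b - b / 2) - (a - a / 2) := by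
  have htot : ((Finset.Ioc a b).filter (fun n => Odd n)).card
      + ((Finset.Ioc a b).filter (fun n => Even n)).card = b - a := by
    rw [← Nat.card_Ioc a b]
    rw [← Finset.card_filter_add_card_filter_not (p := fun n => Odd n) (s := Finset.Ioc a b)]
    congr 2
    apply Finset.filter_congr
    intro x _
    simp [Nat.not_odd_iff_even]
  rw [even_card a b h] at htot
  omega

/-- Dwell-time condition verification in Example 2: some `λ > 0` works with `μ = ln 3`. -/
theorem stmt10 :
    ∃ lam : ℝ, 0 < lam ∧ ∀ s t : ℝ, 0 ≤ s → s ≤ t →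
      Real.log 3 * (({n : ℕ | 0 < n ∧ Odd n ∧ (n : ℝ) ∈ Set.Ioc s t}.ncard : ℝ))
      + Real.log 2 * (({n : ℕ | 0 < n ∧ Even n ∧ (n : ℝ) ∈ Set.Ioc s t}.ncard : ℝ))
      - (1 - lam) * (t - s) ≤ Real.log 3 := by
  refine ⟨1 - Real.log 6 / 2, ?_, ?_⟩
  · have h6 : Real.log 6 < 2 := by
      rw [Real.log_lt_iff_lt_exp (by norm_num)]
      have h := Real.exp_one_gt_d9
      have : Real.exp 2 = Real.exp 1 * Real.exp 1 := by
        rw [← Real.exp_add]; norm_num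
      nlinarith
    linarith
  intro s t hs hst
  set a := ⌊s⌋₊ with ha
  set b := ⌊t⌋₊ with hb
  have hab : a ≤ b := Nat.floor_le_floor hst
  have ht : 0 ≤ t := hs.trans hst
  have hA : {n : ℕ | 0 < n ∧ Odd n ∧ (n : ℝ) ∈ Set.Ioc s t}
      = ↑((Finset.Ioc a b).filter (fun n => Odd n)) := by
    ext n
    simp only [Set.mem_setOf_eq, Finset.coe_filter, Finset.mem_Ioc, Set.mem_Ioc,
      Set.mem_setOf_eq]
    constructor
    · rintro ⟨hn, ho, h1, h2⟩
      exact ⟨⟨(Nat.floor_lt hs).2 h1, Nat.le_floor h2⟩, ho⟩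
    · rintro ⟨⟨h1, h2⟩, ho⟩
      have hsn : s < n := (Nat.floor_lt hs).1 h1
      have htn : (n : ℝ) ≤ t := (Nat.le_floor_iff ht).1 h2
      have : 0 < n := by omega
      exact ⟨this, ho, hsn, htn⟩
  have hB : {n : ℕ | 0 < n ∧ Even n ∧ (n : ℝ) ∈ Set.Ioc s t}
      = ↑((Finset.Ioc a b).filter (fun n => Even n)) := by
    ext n
    simp only [Set.mem_setOf_eq, Finset.coe_filter, Finset.mem_Ioc, Set.mem_Ioc,
      Set.mem_setOf_eq]
    constructor
    · rintro ⟨hn, ho, h1, h2⟩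
      exact ⟨⟨(Nat.floor_lt hs).2 h1, Nat.le_floor h2⟩, ho⟩
    · rintro ⟨⟨h1, h2⟩, ho⟩
      have hsn : s < n := (Nat.floor_lt hs).1 h1
      have htn : (n : ℝ) ≤ t := (Nat.le_floor_iff ht).1 h2
      have : 0 < n := by omega
      exact ⟨this, ho, hsn, htn⟩
  rw [hA, hB, Set.ncard_coe_finset, Set.ncard_coe_finset, odd_card a b hab,
    even_card a b hab]
  -- let N1 N2 be the nat values
  set N1 : ℕ := (b - b / 2) - (a - a / 2) with hN1
  set N2 : ℕ := b / 2 - a / 2 with hN2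
  have key1 : N1 ≤ N2 + 1 := by omega
  have key2 : N1 + N2 = b - a := by omega
  have hbt : (b : ℝ) ≤ t := Nat.floor_le ht
  have hsa : s < (a : ℝ) + 1 := Nat.lt_floor_add_one s
  have hsum : (N1 : ℝ) + (N2 : ℝ) ≤ t - s + 1 := by
    have : ((N1 + N2 : ℕ) : ℝ) = (b : ℝ) - (a : ℝ) := by
      rw [key2]; push_cast [hab]; ring
    push_cast at this
    have hsa' : s - 1 < (a : ℝ) := by linarith
    linarith
  have key1' : (N1 : ℝ) ≤ (N2 : ℝ) + 1 := by exact_mod_cast key1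
  have hlog6 : Real.log 6 = Real.log 2 + Real.log 3 := by
    rw [show (6 : ℝ) = 2 * 3 by norm_num, Real.log_mul (by norm_num) (by norm_num)]
  have hd : Real.log 2 ≤ Real.log 3 := Real.log_le_log (by norm_num) (by norm_num)
  have h2pos : 0 ≤ Real.log 2 := Real.log_nonneg (by norm_num)
  have hts : 0 ≤ t - s := by linarith
  nlinarith [mul_nonneg (sub_nonneg.2 hd) (sub_nonneg.2 hts),
    Nat.cast_nonneg (α := ℝ) N1, Nat.cast_nonneg (α := ℝ) N2]
end

section
/- Let x, y ∈ ℝ with |y| ≥ |x|. Then sign(y)·(-y·(1+e^{|y|}) + |x|·e^{|x|}) ≤ -|y| (for y ≠ 0). -/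
/-- Lyapunov decay estimate for the second subsystem of Example 2 under the gain
condition `|y| ≥ |x|`. -/
theorem stmt13 (x y : ℝ) (hy : y ≠ 0) (hgain : |x| ≤ |y|) :
    Real.sign y * (-y * (1 + Real.exp |y|) + |x| * Real.exp |x|) ≤ -|y| := by
  have hxe : |x| * Real.exp |x| ≤ |y| * Real.exp |y| :=
    mul_le_mul hgain (Real.exp_le_exp.2 hgain) (Real.exp_pos _).le (abs_nonneg y)
  have hx0 : (0:ℝ) ≤ |x| := abs_nonneg x
  have hex : (0:ℝ) < Real.exp |x| := Real.exp_pos _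
  rcases lt_or_gt_of_ne hy with h | h
  · rw [Real.sign_of_neg h, abs_of_neg h] at *
    nlinarith
  · rw [Real.sign_of_pos h, abs_of_pos h] at *
    nlinarith
end
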